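/- arXiv:1609.00027 — 2 statements merged into one kernel-verified Lean document; each statement's English description precedes it below -/
import Mathlib

section
/- Let f, g ∈ L¹(ℝ) satisfy ∫_ℝ (1+x²)(|f(x)|² + |g(x)|²) dx < ∞. Then for every N ≥ 1, ∫_ℝ∫_ℝ f(x) ζ_N(1+i(x−y)) conj(g(y)) dx dy = ∑_{n∈ℕ_N} n^{−1} 𝓕f((2π)^{−1} log n) · conj(𝓕g((2π)^{−1} log n)), both the double integral and the series converging absolutely. -/
open MeasureTheory Real Complex

/-- The `k`-th prime (`0`-indexed): `nthPrime 0 = 2`, `nthPrime 1 = 3`, …  -/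
noncomputable def nthPrime (k : ℕ) : ℕ := Nat.nth Nat.Prime k

/-- The truncated Euler product `ζ_N(s) = ∏_{k=1}^N (1 − p_k^{−s})⁻¹`. -/
noncomputable def zetaTrunc (N : ℕ) (s : ℂ) : ℂ :=
  ∏ k ∈ Finset.range N, (1 - (nthPrime k : ℂ) ^ (-s))⁻¹

/-- `n` belongs to `ℕ_N`, i.e. `n ≥ 1` and all prime factors of `n` lie among the
first `N` primes. -/
def memNN (N n : ℕ) : Prop :=
  0 < n ∧ ∀ q : ℕ, q.Prime → q ∣ n → ∃ k < N, q = nthPrime k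

lemma nthPrime_prime (k : ℕ) : (nthPrime k).Prime :=
  Nat.nth_mem_of_infinite Nat.infinite_setOf_prime k

lemma nthPrime_lt_nthPrime {j k : ℕ} : nthPrime j < nthPrime k ↔ j < k :=
  Nat.nth_lt_nth Nat.infinite_setOf_prime

lemma memNN_iff (N n : ℕ) : memNN N n ↔ n ∈ Nat.smoothNumbers (nthPrime N) := by
  rw [Nat.mem_smoothNumbers']
  constructor
  · rintro ⟨hn, h⟩ p pp pd
    obtain ⟨k, hk, rfl⟩ := h p pp pd
    exact nthPrime_lt_nthPrime.mpr hk
  · intro h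
    refine ⟨?_, fun q hq hd => ?_⟩
    · rcases Nat.eq_zero_or_pos n with rfl | h1
      · exact absurd (h _ (nthPrime_prime N) (dvd_zero _)) (lt_irrefl _)
      · exact h1
    · have hlt := h q hq hd
      refine ⟨Nat.count Nat.Prime q, ?_, (Nat.nth_count hq).symm⟩
      rw [← Nat.nth_count hq] at hlt
      exact nthPrime_lt_nthPrime.mp hlt

noncomputable def eulerF (t : ℝ) : ℕ →* ℂ where
  toFun n := (n : ℂ) ^ (-(1 + (t : ℂ) * Complex.I))
  map_one' := by simp
  map_mul' m n := by
    push_cast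
    exact Complex.natCast_mul_natCast_cpow m n _

lemma eulerF_apply (t : ℝ) (n : ℕ) :
    eulerF t n = (n : ℂ) ^ (-(1 + (t : ℂ) * Complex.I)) := rfl

lemma norm_eulerF (t : ℝ) {n : ℕ} (hn : 0 < n) : ‖eulerF t n‖ = (n : ℝ)⁻¹ := by
  rw [eulerF_apply, Complex.norm_natCast_cpow_of_pos hn]
  have : (-(1 + (t : ℂ) * Complex.I)).re = -1 := by simp
  rw [this, Real.rpow_neg_one]

lemma euler (N : ℕ) (t : ℝ) :
    Summable (fun m : Nat.smoothNumbers (nthPrime N) => ‖eulerF t m‖) ∧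
      HasSum (fun m : Nat.smoothNumbers (nthPrime N) => eulerF t (m : ℕ))
        (zetaTrunc N (1 + (t : ℂ) * Complex.I)) := by
  have h : ∀ {p : ℕ}, p.Prime → ‖eulerF t p‖ < 1 := by
    intro p hp
    rw [norm_eulerF t hp.pos]
    rw [inv_lt_one_iff₀]
    right
    exact_mod_cast hp.one_lt
  obtain ⟨h1, h2⟩ :=
    EulerProduct.summable_and_hasSum_smoothNumbers_prod_primesBelow_geometric h (nthPrime N)
  refine ⟨h1, ?_⟩
  convert h2 using 1
  · rfl
  unfold zetaTrunc
  refine Finset.prod_nbij nthPrime (fun k hk => ?_) (fun a _ b _ hab => ?_)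
    (fun p hp => ?_) (fun k hk => ?_)
  · exact Nat.mem_primesBelow.mpr
      ⟨nthPrime_lt_nthPrime.mpr (Finset.mem_range.mp hk), nthPrime_prime k⟩
  · by_contra hne
    rcases lt_or_gt_of_ne hne with hlt | hlt
    · exact absurd hab (nthPrime_lt_nthPrime.mpr hlt).ne
    · exact absurd hab.symm (nthPrime_lt_nthPrime.mpr hlt).ne
  · simp only [Finset.coe_range, Set.mem_image, Set.mem_Iio]
    have hp' := Nat.prime_of_mem_primesBelow hp
    refine ⟨Nat.count Nat.Prime p, ?_, Nat.nth_count hp'⟩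
    have := Nat.lt_of_mem_primesBelow hp
    rw [← Nat.nth_count hp'] at this
    exact nthPrime_lt_nthPrime.mp this
  · rw [eulerF_apply]

lemma zetaTrunc_eq_tsum (N : ℕ) (t : ℝ) :
    zetaTrunc N (1 + (t : ℂ) * Complex.I) =
      ∑' m : Nat.smoothNumbers (nthPrime N), eulerF t (m : ℕ) :=
  ((euler N t).2).tsum_eq.symm

lemma norm_zetaTrunc_le (N : ℕ) (t : ℝ) :
    ‖zetaTrunc N (1 + (t : ℂ) * Complex.I)‖ ≤
      ∑' m : Nat.smoothNumbers (nthPrime N), ((m : ℕ) : ℝ)⁻¹ := by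
  rw [zetaTrunc_eq_tsum]
  refine (norm_tsum_le_tsum_norm (euler N t).1).trans (le_of_eq ?_)
  refine tsum_congr fun m => ?_
  exact norm_eulerF t (Nat.pos_of_ne_zero (Nat.ne_zero_of_mem_smoothNumbers m.2))

lemma conj_integrable {h : ℝ → ℂ} (hh : Integrable h) :
    Integrable fun y => (starRingEnd ℂ) (h y) := by
  refine hh.norm.mono' (continuous_star.comp_aestronglyMeasurable hh.1) ?_
  filter_upwards with y
  simp

lemma key_fact (n : ℕ) (hn : 0 < n) (x y : ℝ) :
    (n : ℂ) ^ (-(1 + ((x - y : ℝ) : ℂ) * Complex.I)) =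
      (n : ℂ)⁻¹ * Complex.exp ((-2 * π * x * ((2 * π)⁻¹ * Real.log n) : ℝ) * Complex.I) *
        (starRingEnd ℂ)
          (Complex.exp ((-2 * π * y * ((2 * π)⁻¹ * Real.log n) : ℝ) * Complex.I)) := by
  have h2pi : (2 * π) ≠ 0 := by positivity
  have hx : (-2 * π * x * ((2 * π)⁻¹ * Real.log n)) = -(x * Real.log n) := by
    field_simp
  have hy : (-2 * π * y * ((2 * π)⁻¹ * Real.log n)) = -(y * Real.log n) := by
    field_simp
  rw [hx, hy]
  have hn0 : (n : ℂ) ≠ 0 := by exact_mod_cast hn.ne'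
  have hconj : (starRingEnd ℂ) (Complex.exp ((-(y * Real.log n) : ℝ) * Complex.I)) =
      Complex.exp ((y * Real.log n : ℝ) * Complex.I) := by
    rw [← Complex.exp_conj, map_mul, Complex.conj_ofReal, Complex.conj_I]
    congr 1
    push_cast
    ring
  have hinv : (n : ℂ)⁻¹ = Complex.exp (-((Real.log n : ℝ) : ℂ)) := by
    rw [Complex.exp_neg, ← Complex.ofReal_exp, Real.exp_log (by exact_mod_cast hn),
      Complex.ofReal_natCast]
  rw [hconj, hinv, Complex.cpow_def_of_ne_zero hn0,
    ← Complex.ofReal_natCast, ← Complex.ofReal_log n.cast_nonneg,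
    ← Complex.exp_add, ← Complex.exp_add]
  congr 1
  push_cast
  ring

lemma term_lemma (f g : ℝ → ℂ) (hf : Integrable f) (hg : Integrable g) (n : ℕ) (hn : 0 < n) :
    Integrable (fun p : ℝ × ℝ =>
      f p.1 * ((n : ℂ) ^ (-(1 + ((p.1 - p.2 : ℝ) : ℂ) * Complex.I))) *
        (starRingEnd ℂ) (g p.2)) ∧
    (∫ p : ℝ × ℝ, f p.1 * ((n : ℂ) ^ (-(1 + ((p.1 - p.2 : ℝ) : ℂ) * Complex.I))) *
        (starRingEnd ℂ) (g p.2)) =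
      (n : ℂ)⁻¹ * FourierTransform.fourier f ((2 * π)⁻¹ * Real.log n) *
        (starRingEnd ℂ) (FourierTransform.fourier g ((2 * π)⁻¹ * Real.log n)) := by
  set ξ := (2 * π)⁻¹ * Real.log n with hξ
  set e : ℝ → ℂ := fun x => Complex.exp ((-2 * π * x * ξ : ℝ) * Complex.I) with he
  have hecont : Continuous e := by
    apply Complex.continuous_exp.comp
    apply Continuous.mul _ continuous_const
    exact Complex.continuous_ofReal.comp (by continuity)
  have henorm : ∀ x, ‖e x‖ = 1 := fun x => by
    rw [he, Complex.norm_exp_ofReal_mul_I]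
  have hfe : Integrable fun x => e x * f x :=
    hf.bdd_mul hecont.aestronglyMeasurable (Filter.Eventually.of_forall fun x => (henorm x).le)
  have hge : Integrable fun y => (starRingEnd ℂ) (e y * g y) :=
    conj_integrable (hg.bdd_mul hecont.aestronglyMeasurable (Filter.Eventually.of_forall fun x => (henorm x).le))
  have hrw : (fun p : ℝ × ℝ =>
      f p.1 * ((n : ℂ) ^ (-(1 + ((p.1 - p.2 : ℝ) : ℂ) * Complex.I))) *
        (starRingEnd ℂ) (g p.2)) =
      fun p : ℝ × ℝ => (n : ℂ)⁻¹ *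
        ((fun x => e x * f x) p.1 * (fun y => (starRingEnd ℂ) (e y * g y)) p.2) := by
    funext p
    rw [key_fact n hn p.1 p.2]
    simp only [map_mul]
    ring
  have hF : Integrable (fun p : ℝ × ℝ => (n : ℂ)⁻¹ *
      ((fun x => e x * f x) p.1 * (fun y => (starRingEnd ℂ) (e y * g y)) p.2)) := by
    rw [Measure.volume_eq_prod]
    exact (hfe.mul_prod hge).const_mul _
  constructor
  · rw [hrw]; exact hF
  · rw [hrw, Measure.volume_eq_prod, integral_const_mul,
      integral_prod_mul (μ := volume) (ν := volume) (f := fun x => e x * f x)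
        (g := fun y => (starRingEnd ℂ) (e y * g y))]
    have h1 : ∫ x : ℝ, e x * f x = FourierTransform.fourier f ξ := by
      rw [Real.fourier_real_eq_integral_exp_smul]
      simp_rw [smul_eq_mul]
      rfl
    have h2 : ∫ y : ℝ, (starRingEnd ℂ) (e y * g y) =
        (starRingEnd ℂ) (FourierTransform.fourier g ξ) := by
      rw [integral_conj]
      congr 1
      rw [Real.fourier_real_eq_integral_exp_smul]
      simp_rw [smul_eq_mul]
      rfl
    rw [h1, h2, mul_assoc]

lemma fourier_bound (h : ℝ → ℂ) (w : ℝ) :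
    ‖FourierTransform.fourier h w‖ ≤ ∫ x, ‖h x‖ := by
  rw [Real.fourier_real_eq_integral_exp_smul]
  refine (norm_integral_le_integral_norm _).trans (le_of_eq ?_)
  simp only [norm_smul, Complex.norm_exp_ofReal_mul_I, one_mul]

lemma zeta_cont (N : ℕ) : Continuous fun t : ℝ => zetaTrunc N (1 + (t : ℂ) * Complex.I) := by
  unfold zetaTrunc
  refine continuous_finset_prod _ fun k _ => ?_
  have hc2 : 1 < nthPrime k := (nthPrime_prime k).one_lt
  have hc0 : ((nthPrime k : ℕ) : ℂ) ≠ 0 := by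
    exact_mod_cast ((Nat.zero_lt_of_lt hc2)).ne'
  have hcpow : Continuous fun t : ℝ =>
      ((nthPrime k : ℕ) : ℂ) ^ (-(1 + (t : ℂ) * Complex.I)) := by
    have : (fun t : ℝ => ((nthPrime k : ℕ) : ℂ) ^ (-(1 + (t : ℂ) * Complex.I))) =
        fun t : ℝ => Complex.exp (Complex.log ((nthPrime k : ℕ) : ℂ) *
          (-(1 + (t : ℂ) * Complex.I))) := by
      funext t
      exact Complex.cpow_def_of_ne_zero hc0 _
    rw [this]
    refine Complex.continuous_exp.comp (continuous_const.mul ?_)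
    exact ((continuous_const.add
      ((Complex.continuous_ofReal).mul continuous_const)).neg)
  refine Continuous.inv₀ (continuous_const.sub hcpow) fun t => ?_
  intro h0
  have h1 : ((nthPrime k : ℕ) : ℂ) ^ (-(1 + (t : ℂ) * Complex.I)) = 1 :=
    (sub_eq_zero.mp h0).symm
  have h2 : ‖((nthPrime k : ℕ) : ℂ) ^ (-(1 + (t : ℂ) * Complex.I))‖ = ((nthPrime k : ℕ) : ℝ)⁻¹ :=
    norm_eulerF t ((Nat.zero_lt_of_lt hc2))
  rw [h1, norm_one] at h2
  have : ((nthPrime k : ℕ) : ℝ) ≤ 1 := by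
    rcases le_or_gt ((nthPrime k : ℕ) : ℝ) 1 with h | h
    · exact h
    · exfalso
      have := inv_lt_one_of_one_lt₀ h
      rw [← h2] at this
      exact (lt_irrefl _ this)
  exact absurd (by exact_mod_cast this) (not_le.mpr hc2)

/-- For `f, g ∈ L¹(ℝ)` with `∫ (1+x²)(|f|²+|g|²) < ∞` and every `N ≥ 1`,
`∫∫ f(x) ζ_N(1+i(x−y)) conj(g(y)) dx dy
  = ∑_{n ∈ ℕ_N} n⁻¹ 𝓕f((2π)⁻¹ log n) conj(𝓕g((2π)⁻¹ log n))`,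
with both the double integral and the series converging absolutely. -/
theorem statement3 (f g : ℝ → ℂ) (hf : Integrable f) (hg : Integrable g)
    (hf2 : Integrable fun x : ℝ => (1 + x ^ 2) * ‖f x‖ ^ 2)
    (hg2 : Integrable fun x : ℝ => (1 + x ^ 2) * ‖g x‖ ^ 2)
    (N : ℕ) (hN : 1 ≤ N) :
    Integrable (fun p : ℝ × ℝ =>
      f p.1 * zetaTrunc N (1 + ((p.1 - p.2 : ℝ) : ℂ) * Complex.I) *
        (starRingEnd ℂ) (g p.2)) ∧
    Summable (fun n : {n : ℕ // memNN N n} =>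
      ‖((n : ℕ) : ℂ)⁻¹ *
        FourierTransform.fourier f ((2 * π)⁻¹ * Real.log ((n : ℕ) : ℝ)) *
        (starRingEnd ℂ) (FourierTransform.fourier g ((2 * π)⁻¹ * Real.log ((n : ℕ) : ℝ)))‖) ∧
    ∫ p : ℝ × ℝ,
        f p.1 * zetaTrunc N (1 + ((p.1 - p.2 : ℝ) : ℂ) * Complex.I) *
          (starRingEnd ℂ) (g p.2) =
      ∑' n : {n : ℕ // memNN N n},
        ((n : ℕ) : ℂ)⁻¹ *
          FourierTransform.fourier f ((2 * π)⁻¹ * Real.log ((n : ℕ) : ℝ)) *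
          (starRingEnd ℂ) (FourierTransform.fourier g ((2 * π)⁻¹ * Real.log ((n : ℕ) : ℝ))) := by
  classical
  set M := nthPrime N with hM
  have hmempos : ∀ m : Nat.smoothNumbers M, 0 < (m : ℕ) := fun m =>
    Nat.pos_of_ne_zero (Nat.ne_zero_of_mem_smoothNumbers m.2)
  -- summability of 1/m over smooth numbers
  have hs0 : Summable fun m : Nat.smoothNumbers M => ((m : ℕ) : ℝ)⁻¹ :=
    ((euler N 0).1).congr fun m => norm_eulerF 0 (hmempos m)
  set C : ℝ := ∑' m : Nat.smoothNumbers M, ((m : ℕ) : ℝ)⁻¹ with hC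
  set K : ℝ := (∫ x, ‖f x‖) * (∫ x, ‖g x‖) with hK
  have hKf : 0 ≤ ∫ x, ‖f x‖ := integral_nonneg fun x => norm_nonneg _
  have hKg : 0 ≤ ∫ x, ‖g x‖ := integral_nonneg fun x => norm_nonneg _
  let e : {n : ℕ // memNN N n} ≃ {n : ℕ // n ∈ Nat.smoothNumbers M} :=
    Equiv.subtypeEquivRight fun n => memNN_iff N n
  -- Part 1 : integrability
  have part1 : Integrable (fun p : ℝ × ℝ =>
      f p.1 * zetaTrunc N (1 + ((p.1 - p.2 : ℝ) : ℂ) * Complex.I) *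
        (starRingEnd ℂ) (g p.2)) := by
    rw [Measure.volume_eq_prod]
    refine Integrable.mono' (((hf.norm.mul_prod hg.norm).const_mul C)) ?_ ?_
    · refine (AEStronglyMeasurable.mul ?_ ?_).mul ?_
      · exact hf.1.comp_fst
      · exact (((zeta_cont N).comp (continuous_fst.sub continuous_snd))).aestronglyMeasurable
      · exact (continuous_star.comp_aestronglyMeasurable hg.1).comp_snd
    · filter_upwards with p
      rw [norm_mul, norm_mul, RCLike.norm_conj]
      calc ‖f p.1‖ * ‖zetaTrunc N (1 + ((p.1 - p.2 : ℝ) : ℂ) * Complex.I)‖ * ‖g p.2‖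
          ≤ ‖f p.1‖ * C * ‖g p.2‖ := by
            refine mul_le_mul_of_nonneg_right (mul_le_mul_of_nonneg_left
              (norm_zetaTrunc_le N (p.1 - p.2)) (norm_nonneg _)) (norm_nonneg _)
        _ = C * (‖f p.1‖ * ‖g p.2‖) := by ring
  -- Part 2 : summability
  have hsum' : Summable fun n : {n : ℕ // memNN N n} => ((n : ℕ) : ℝ)⁻¹ := by
    exact ((Equiv.summable_iff e).mpr hs0).congr fun n => rfl
  have part2 : Summable (fun n : {n : ℕ // memNN N n} =>
      ‖((n : ℕ) : ℂ)⁻¹ *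
        FourierTransform.fourier f ((2 * π)⁻¹ * Real.log ((n : ℕ) : ℝ)) *
        (starRingEnd ℂ) (FourierTransform.fourier g ((2 * π)⁻¹ * Real.log ((n : ℕ) : ℝ)))‖) := by
    refine Summable.of_nonneg_of_le (fun _ => norm_nonneg _) (fun n => ?_) (hsum'.mul_right K)
    rw [norm_mul, norm_mul, RCLike.norm_conj, norm_inv, Complex.norm_natCast, hK]
    calc ((n : ℕ) : ℝ)⁻¹ * ‖FourierTransform.fourier f ((2 * π)⁻¹ * Real.log ((n : ℕ) : ℝ))‖ *
          ‖FourierTransform.fourier g ((2 * π)⁻¹ * Real.log ((n : ℕ) : ℝ))‖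
        ≤ ((n : ℕ) : ℝ)⁻¹ * (∫ x, ‖f x‖) * (∫ x, ‖g x‖) := by
          refine mul_le_mul (mul_le_mul le_rfl (fourier_bound f _) (norm_nonneg _)
            (by positivity)) (fourier_bound g _) (norm_nonneg _) (by positivity)
      _ = ((n : ℕ) : ℝ)⁻¹ * ((∫ x, ‖f x‖) * (∫ x, ‖g x‖)) := by ring
  -- Part 3 : the identity
  have part3 : ∫ p : ℝ × ℝ,
        f p.1 * zetaTrunc N (1 + ((p.1 - p.2 : ℝ) : ℂ) * Complex.I) *
          (starRingEnd ℂ) (g p.2) =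
      ∑' n : {n : ℕ // memNN N n},
        ((n : ℕ) : ℂ)⁻¹ *
          FourierTransform.fourier f ((2 * π)⁻¹ * Real.log ((n : ℕ) : ℝ)) *
          (starRingEnd ℂ) (FourierTransform.fourier g ((2 * π)⁻¹ * Real.log ((n : ℕ) : ℝ))) := by
    set G : Nat.smoothNumbers M → ℝ × ℝ → ℂ := fun m p =>
      f p.1 * (((m : ℕ) : ℂ) ^ (-(1 + ((p.1 - p.2 : ℝ) : ℂ) * Complex.I))) *
        (starRingEnd ℂ) (g p.2) with hG
    have hGint : ∀ m : Nat.smoothNumbers M, Integrable (G m) := fun m =>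
      (term_lemma f g hf hg (m : ℕ) (hmempos m)).1
    have hpt : (fun p : ℝ × ℝ =>
        f p.1 * zetaTrunc N (1 + ((p.1 - p.2 : ℝ) : ℂ) * Complex.I) *
          (starRingEnd ℂ) (g p.2)) = fun p => ∑' m : Nat.smoothNumbers M, G m p := by
      funext p
      rw [mul_assoc, zetaTrunc_eq_tsum N (p.1 - p.2), ← tsum_mul_right, ← tsum_mul_left]
      exact tsum_congr fun m => (mul_assoc _ _ _).symm
    have hGnorm : ∀ m : Nat.smoothNumbers M,
        ∫⁻ p : ℝ × ℝ, ‖G m p‖ₑ = ENNReal.ofReal (((m : ℕ) : ℝ)⁻¹ * K) := by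
      intro m
      rw [← ofReal_integral_norm_eq_lintegral_enorm (hGint m)]
      congr 1
      have hnn : (fun p : ℝ × ℝ => ‖G m p‖) =
          fun p : ℝ × ℝ => ((m : ℕ) : ℝ)⁻¹ * ((fun x => ‖f x‖) p.1 * (fun y => ‖g y‖) p.2) := by
        funext p
        rw [hG]
        simp only
        rw [norm_mul, norm_mul, RCLike.norm_conj,
          show ‖((m : ℕ) : ℂ) ^ (-(1 + ((p.1 - p.2 : ℝ) : ℂ) * Complex.I))‖
            = ((m : ℕ) : ℝ)⁻¹ from norm_eulerF (p.1 - p.2) (hmempos m)]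
        ring
      rw [hnn, Measure.volume_eq_prod, integral_const_mul,
        integral_prod_mul (μ := volume) (ν := volume) (f := fun x => ‖f x‖)
          (g := fun y => ‖g y‖)]
    rw [hpt, integral_tsum (fun m => (hGint m).1) ?_]
    · rw [← Equiv.tsum_eq e fun m => ∫ p : ℝ × ℝ, G m p]
      refine tsum_congr fun n => ?_
      have hn : 0 < (n : ℕ) := n.2.1
      simp only [hG]
      exact (term_lemma f g hf hg (n : ℕ) hn).2
    · rw [show (fun m : Nat.smoothNumbers M => ∫⁻ p : ℝ × ℝ, ‖G m p‖ₑ) =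
        fun m : Nat.smoothNumbers M => ENNReal.ofReal (((m : ℕ) : ℝ)⁻¹ * K) from funext hGnorm]
      rw [← ENNReal.ofReal_tsum_of_nonneg (fun m => by positivity) (hs0.mul_right K)]
      exact ENNReal.ofReal_ne_top
  exact ⟨part1, part2, part3⟩
end

section
/- Let (X,d) be a separable metric space and let μ, ν be Borel probability measures on X. Then for every x₀ ∈ X and every R > 0 there exists a Borel probability measure π on X × X with marginals μ and ν (i.e. π ∘ proj₁^{−1} = μ and π ∘ proj₂^{−1} = ν) such that ∫_{X×X} d(x,y) dπ(x,y) ≤ 4R · |μ−ν|(B(x₀,R)) + 32 ∫_{R/2}^∞ |μ−ν|(X ∖ B(x₀,r)) dr, where |μ−ν| denotes the total variation measure of the signed measure μ−ν and B(x₀,r) the open ball of radius r centered at x₀ (the right-hand side may be infinite). -/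
open MeasureTheory Set

lemma key_tv {X : Type*} [MeasurableSpace X] (μ ν : Measure X)
    [IsFiniteMeasure μ] [IsFiniteMeasure ν] {A : Set X} (hA : MeasurableSet A) :
    μ A ≤ ν A + (μ.toSignedMeasure - ν.toSignedMeasure).totalVariation A := by
  set s := μ.toSignedMeasure - ν.toSignedMeasure with hs
  set p := s.toJordanDecomposition.posPart with hp
  set n := s.toJordanDecomposition.negPart with hn
  have h1 : s A = (μ A).toReal - (ν A).toReal :=
    Measure.toSignedMeasure_sub_apply hA
  have h2 : s A = (p A).toReal - (n A).toReal := by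
    conv_lhs => rw [← s.toSignedMeasure_toJordanDecomposition]
    rw [JordanDecomposition.toSignedMeasure, Measure.toSignedMeasure_sub_apply hA]
    rfl
  have hσ : s.totalVariation A = p A + n A := rfl
  have key : (μ A).toReal ≤ (ν A).toReal + (s.totalVariation A).toReal := by
    rw [hσ, ENNReal.toReal_add (measure_ne_top p A) (measure_ne_top n A)]
    have := h1.symm.trans h2
    have hn0 : 0 ≤ (n A).toReal := ENNReal.toReal_nonneg
    linarith
  have := ENNReal.ofReal_le_ofReal key
  rwa [ENNReal.ofReal_toReal (measure_ne_top μ A),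
    ENNReal.ofReal_add ENNReal.toReal_nonneg ENNReal.toReal_nonneg,
    ENNReal.ofReal_toReal (measure_ne_top ν A),
    ENNReal.ofReal_toReal (by rw [hσ]; exact ENNReal.add_ne_top.2 ⟨measure_ne_top p A, measure_ne_top n A⟩)] at this

lemma tail_bound {X : Type*} [MetricSpace X] [MeasurableSpace X] [BorelSpace X]
    (σ : Measure X) (x₀ : X) {R : ℝ} (hR : 0 < R) :
    ∫⁻ x, edist x x₀ ∂σ ≤
      ENNReal.ofReal (R / 2) * σ (Metric.ball x₀ R) +
        2 * ∫⁻ r in Ici (R / 2), σ (Metric.ball x₀ r)ᶜ := by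
  set c := R / 2 with hc
  have hc0 : 0 < c := half_pos hR
  set B := Metric.ball x₀ R with hB
  set I := ∫⁻ r in Ici c, σ (Metric.ball x₀ r)ᶜ with hI
  have hmeas : Measurable fun x => dist x x₀ := (continuous_id.dist continuous_const).measurable
  have eq1 : ∫⁻ x, edist x x₀ ∂σ = ∫⁻ t in Ioi 0, σ {a | t < dist a x₀} := by
    simp_rw [edist_dist]
    exact lintegral_eq_lintegral_meas_lt σ (ae_of_all _ fun x => dist_nonneg) hmeas.aemeasurable
  have step2 : ∫⁻ t in Ioi 0, σ {a | t < dist a x₀} ≤ ∫⁻ t in Ioi 0, σ (Metric.ball x₀ t)ᶜ :=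
    lintegral_mono fun t => measure_mono fun a ha hb => lt_asymm ha (Metric.mem_ball.1 hb)
  have hsplit : (volume.restrict (Ioi (0:ℝ))) =
      volume.restrict (Ioc 0 c) + volume.restrict (Ioi c) := by
    rw [← Measure.restrict_union (Ioc_disjoint_Ioi le_rfl) measurableSet_Ioi,
      Ioc_union_Ioi_eq_Ioi hc0.le]
  have hBc : ∀ t : ℝ, σ (Metric.ball x₀ t)ᶜ ≤ σ B + σ Bᶜ := by
    intro t
    calc σ (Metric.ball x₀ t)ᶜ ≤ σ univ := measure_mono (subset_univ _)
    _ ≤ σ B + σ Bᶜ := by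
        rw [← Set.union_compl_self B]; exact measure_union_le _ _
  have part1 : ∫⁻ t in Ioc 0 c, σ (Metric.ball x₀ t)ᶜ ≤
      ENNReal.ofReal c * σ B + ENNReal.ofReal c * σ Bᶜ := by
    calc ∫⁻ t in Ioc 0 c, σ (Metric.ball x₀ t)ᶜ
        ≤ ∫⁻ _ in Ioc (0:ℝ) c, (σ B + σ Bᶜ) := lintegral_mono fun t => hBc t
      _ = (σ B + σ Bᶜ) * volume (Ioc (0:ℝ) c) := setLIntegral_const _ _
      _ = (σ B + σ Bᶜ) * ENNReal.ofReal c := by rw [Real.volume_Ioc, sub_zero]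
      _ = ENNReal.ofReal c * σ B + ENNReal.ofReal c * σ Bᶜ := by ring
  have part2 : ∫⁻ t in Ioi c, σ (Metric.ball x₀ t)ᶜ ≤ I :=
    lintegral_mono' (Measure.restrict_mono Ioi_subset_Ici_self le_rfl) le_rfl
  have hanti : Antitone fun t : ℝ => σ (Metric.ball x₀ t)ᶜ := fun t t' h =>
    measure_mono (compl_subset_compl.2 (Metric.ball_subset_ball h))
  have part3 : ENNReal.ofReal c * σ Bᶜ ≤ I := by
    have h1 : ENNReal.ofReal c * σ Bᶜ = ∫⁻ _ in Icc c R, σ Bᶜ := by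
      rw [setLIntegral_const, Real.volume_Icc, mul_comm]
      congr 1
      rw [hc]; ring_nf
    rw [h1]
    calc ∫⁻ _ in Icc c R, σ Bᶜ ≤ ∫⁻ t in Icc c R, σ (Metric.ball x₀ t)ᶜ := by
          refine setLIntegral_mono hanti.measurable fun t ht => ?_
          exact measure_mono (compl_subset_compl.2 (Metric.ball_subset_ball ht.2))
      _ ≤ I := lintegral_mono' (Measure.restrict_mono Icc_subset_Ici_self le_rfl) le_rfl
  calc ∫⁻ x, edist x x₀ ∂σ = ∫⁻ t in Ioi 0, σ {a | t < dist a x₀} := eq1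
    _ ≤ ∫⁻ t in Ioi 0, σ (Metric.ball x₀ t)ᶜ := step2
    _ = (∫⁻ t in Ioc 0 c, σ (Metric.ball x₀ t)ᶜ) + ∫⁻ t in Ioi c, σ (Metric.ball x₀ t)ᶜ := by
        rw [hsplit] at *
        exact lintegral_add_measure _ _ _
    _ ≤ (ENNReal.ofReal c * σ B + ENNReal.ofReal c * σ Bᶜ) + I := add_le_add part1 part2
    _ ≤ (ENNReal.ofReal c * σ B + I) + I := by gcongr
    _ = ENNReal.ofReal c * σ B + 2 * I := by rw [two_mul]; ring

/-- Let `(X,d)` be a separable metric space and `μ, ν` Borel probability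
measures on `X`.  For every `x₀ ∈ X` and `R > 0` there is a coupling `π` of `μ` and `ν`
with `∫ d(x,y) dπ ≤ 4R |μ−ν|(B(x₀,R)) + 32 ∫_{R/2}^∞ |μ−ν|(X ∖ B(x₀,r)) dr`
(the right-hand side may be infinite). -/
theorem statement15 {X : Type*} [MetricSpace X] [TopologicalSpace.SeparableSpace X]
    [MeasurableSpace X] [BorelSpace X]
    (μ ν : Measure X) [IsProbabilityMeasure μ] [IsProbabilityMeasure ν]
    (x₀ : X) (R : ℝ) (hR : 0 < R) :
    ∃ π : Measure (X × X), IsProbabilityMeasure π ∧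
      π.map Prod.fst = μ ∧ π.map Prod.snd = ν ∧
      ∫⁻ p : X × X, edist p.1 p.2 ∂π ≤
        ENNReal.ofReal (4 * R) *
            (μ.toSignedMeasure - ν.toSignedMeasure).totalVariation (Metric.ball x₀ R) +
          32 * ∫⁻ r in Set.Ici (R / 2),
            (μ.toSignedMeasure - ν.toSignedMeasure).totalVariation (Metric.ball x₀ r)ᶜ := by
  haveI : SecondCountableTopology X := UniformSpace.secondCountable_of_separable X
  set σ := (μ.toSignedMeasure - ν.toSignedMeasure).totalVariation with hσdef
  set B := Metric.ball x₀ R with hB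
  set I := ∫⁻ r in Set.Ici (R / 2), σ (Metric.ball x₀ r)ᶜ with hIdef
  have hdiag : Measurable fun x : X => (x, x) := measurable_id.prodMk measurable_id
  have hedist : Measurable fun p : X × X => edist p.1 p.2 := measurable_edist
  -- Hahn decomposition
  obtain ⟨E, hE, hE1, hE2⟩ := hahn_decomposition (μ := μ) (ν := ν)
  have hle₁ : ν.restrict E ≤ μ.restrict E := by
    rw [Measure.le_iff]; intro A hA
    rw [Measure.restrict_apply hA, Measure.restrict_apply hA]
    exact hE1 _ (hA.inter hE) inter_subset_right
  have hle₂ : μ.restrict Eᶜ ≤ ν.restrict Eᶜ := by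
    rw [Measure.le_iff]; intro A hA
    rw [Measure.restrict_apply hA, Measure.restrict_apply hA]
    exact hE2 _ (hA.inter hE.compl) inter_subset_right
  set ρ₁ := μ.restrict E - ν.restrict E with hρ₁def
  set ρ₂ := ν.restrict Eᶜ - μ.restrict Eᶜ with hρ₂def
  set lam := ν.restrict E + μ.restrict Eᶜ with hlamdef
  have hμeq : ρ₁ + lam = μ := by
    rw [hρ₁def, hlamdef, ← add_assoc, Measure.sub_add_cancel_of_le hle₁,
      Measure.restrict_add_restrict_compl hE]
  have hνeq : ρ₂ + lam = ν := by
    rw [hρ₂def, hlamdef, add_comm (ν.restrict E) (μ.restrict Eᶜ), ← add_assoc,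
      Measure.sub_add_cancel_of_le hle₂, add_comm (ν.restrict Eᶜ) (ν.restrict E),
      Measure.restrict_add_restrict_compl hE]
  have hρ₁μ : ρ₁ ≤ μ := le_trans Measure.sub_le Measure.restrict_le_self
  have hρ₂ν : ρ₂ ≤ ν := le_trans Measure.sub_le Measure.restrict_le_self
  haveI : IsFiniteMeasure ρ₁ := ⟨lt_of_le_of_lt (hρ₁μ univ) (measure_lt_top μ univ)⟩
  haveI : IsFiniteMeasure ρ₂ := ⟨lt_of_le_of_lt (hρ₂ν univ) (measure_lt_top ν univ)⟩
  -- bounds by the total variation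
  have hρ₁σ : ρ₁ ≤ σ := by
    rw [Measure.le_iff]; intro A hA
    rw [hρ₁def, Measure.sub_apply hA hle₁, Measure.restrict_apply hA, Measure.restrict_apply hA]
    refine tsub_le_iff_right.2 ?_
    calc μ (A ∩ E) ≤ ν (A ∩ E) + σ (A ∩ E) := key_tv μ ν (hA.inter hE)
      _ ≤ ν (A ∩ E) + σ A := add_le_add le_rfl (measure_mono inter_subset_left)
      _ = σ A + ν (A ∩ E) := add_comm _ _
  have hρ₂σ : ρ₂ ≤ σ := by
    rw [Measure.le_iff]; intro A hA
    rw [hρ₂def, Measure.sub_apply hA hle₂, Measure.restrict_apply hA, Measure.restrict_apply hA]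
    refine tsub_le_iff_right.2 ?_
    have hswap : (ν.toSignedMeasure - μ.toSignedMeasure).totalVariation = σ := by
      rw [hσdef, ← MeasureTheory.SignedMeasure.totalVariation_neg, neg_sub]
    calc ν (A ∩ Eᶜ) ≤ μ (A ∩ Eᶜ) + σ (A ∩ Eᶜ) := by
          have := key_tv ν μ (hA.inter hE.compl)
          rwa [hswap] at this
      _ ≤ μ (A ∩ Eᶜ) + σ A := add_le_add le_rfl (measure_mono inter_subset_left)
      _ = σ A + μ (A ∩ Eᶜ) := add_comm _ _
  -- equal total masses
  have huniv : ρ₂ univ = ρ₁ univ := by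
    have h1 : ρ₁ univ + lam univ = 1 := by
      rw [← Measure.add_apply, hμeq]; exact measure_univ
    have h2 : ρ₂ univ + lam univ = 1 := by
      rw [← Measure.add_apply, hνeq]; exact measure_univ
    rw [← h1] at h2
    exact (ENNReal.add_left_inj (measure_ne_top lam univ)).1 h2
  by_cases ht0 : ρ₁ univ = 0
  · -- μ = ν : use the diagonal coupling
    have hρ₁ : ρ₁ = 0 := Measure.measure_univ_eq_zero.1 ht0
    have hρ₂ : ρ₂ = 0 := Measure.measure_univ_eq_zero.1 (huniv.trans ht0)
    have hμν : μ = ν := by rw [← hμeq, ← hνeq, hρ₁, hρ₂]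
    refine ⟨μ.map fun x => (x, x), Measure.isProbabilityMeasure_map hdiag.aemeasurable, ?_, ?_, ?_⟩
    · rw [Measure.map_map measurable_fst hdiag]; exact Measure.map_id
    · rw [Measure.map_map measurable_snd hdiag, hμν]; exact Measure.map_id
    · rw [lintegral_map hedist hdiag]
      simp only [edist_self, lintegral_zero]
      exact zero_le
  · set t := ρ₁ univ with htdef
    have httop : t ≠ ⊤ := (lt_of_le_of_lt (hρ₁μ univ) (measure_lt_top μ univ)).ne
    have hmul : t⁻¹ * t = 1 := ENNReal.inv_mul_cancel ht0 httop
    have hcomp1 : (Prod.fst ∘ fun x : X => (x, x)) = id := rfl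
    have hcomp2 : (Prod.snd ∘ fun x : X => (x, x)) = id := rfl
    have hfst : ((lam.map fun x => (x, x)) + t⁻¹ • ρ₁.prod ρ₂).map Prod.fst = μ := by
      rw [Measure.map_add _ _ measurable_fst, Measure.map_smul,
        Measure.map_map measurable_fst hdiag, hcomp1, Measure.map_id,
        Measure.map_fst_prod, huniv, smul_smul, hmul, one_smul, add_comm]
      exact hμeq
    have hsnd : ((lam.map fun x => (x, x)) + t⁻¹ • ρ₁.prod ρ₂).map Prod.snd = ν := by
      rw [Measure.map_add _ _ measurable_snd, Measure.map_smul,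
        Measure.map_map measurable_snd hdiag, hcomp2, Measure.map_id,
        Measure.map_snd_prod, smul_smul, hmul, one_smul, add_comm]
      exact hνeq
    refine ⟨(lam.map fun x => (x, x)) + t⁻¹ • ρ₁.prod ρ₂, ⟨?_⟩, hfst, hsnd, ?_⟩
    · have h : ((lam.map fun x => (x, x)) + t⁻¹ • ρ₁.prod ρ₂).map Prod.fst Set.univ
          = μ Set.univ := by rw [hfst]
      rw [Measure.map_apply measurable_fst MeasurableSet.univ, preimage_univ] at h
      rw [h]
      exact measure_univ
    · set A := ∫⁻ x, edist x x₀ ∂σ with hAdef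
      have hAbd : A ≤ ENNReal.ofReal (R / 2) * σ B + 2 * I := tail_bound σ x₀ hR
      have hintdiag : ∫⁻ p : X × X, edist p.1 p.2 ∂(lam.map fun x => (x, x)) = 0 := by
        rw [lintegral_map hedist hdiag]
        simp [edist_self]
      have h1 : ∫⁻ p : X × X, edist p.1 x₀ ∂(ρ₁.prod ρ₂) ≤ t * A := by
        have := (lintegral_map (measurable_edist_left (x := x₀)) measurable_fst
          (μ := ρ₁.prod ρ₂)).symm
        rw [this, Measure.map_fst_prod, huniv, lintegral_smul_measure]
        exact mul_le_mul' le_rfl (lintegral_mono' hρ₁σ le_rfl)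
      have h2 : ∫⁻ p : X × X, edist x₀ p.2 ∂(ρ₁.prod ρ₂) ≤ t * A := by
        have := (lintegral_map (measurable_edist_right (x := x₀)) measurable_snd
          (μ := ρ₁.prod ρ₂)).symm
        rw [this, Measure.map_snd_prod, lintegral_smul_measure]
        refine mul_le_mul' le_rfl (le_trans (lintegral_mono' hρ₂σ le_rfl) ?_)
        refine le_of_eq (lintegral_congr fun x => ?_)
        rw [edist_comm]
      have htri : ∫⁻ p : X × X, edist p.1 p.2 ∂(ρ₁.prod ρ₂) ≤ t * (2 * A) := by
        calc ∫⁻ p : X × X, edist p.1 p.2 ∂(ρ₁.prod ρ₂)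
            ≤ ∫⁻ p : X × X, (edist p.1 x₀ + edist x₀ p.2) ∂(ρ₁.prod ρ₂) :=
              lintegral_mono fun p => edist_triangle _ _ _
          _ = (∫⁻ p : X × X, edist p.1 x₀ ∂(ρ₁.prod ρ₂)) +
                ∫⁻ p : X × X, edist x₀ p.2 ∂(ρ₁.prod ρ₂) :=
              lintegral_add_left ((measurable_edist_left (x := x₀)).comp measurable_fst) _
          _ ≤ t * A + t * A := add_le_add h1 h2
          _ = t * (2 * A) := by ring
      calc ∫⁻ p : X × X, edist p.1 p.2 ∂((lam.map fun x => (x, x)) + t⁻¹ • ρ₁.prod ρ₂)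
          = t⁻¹ * ∫⁻ p : X × X, edist p.1 p.2 ∂(ρ₁.prod ρ₂) := by
            rw [lintegral_add_measure, hintdiag, zero_add, lintegral_smul_measure, smul_eq_mul]
        _ ≤ t⁻¹ * (t * (2 * A)) := mul_le_mul' le_rfl htri
        _ = 2 * A := by rw [← mul_assoc, hmul, one_mul]
        _ ≤ 2 * (ENNReal.ofReal (R / 2) * σ B + 2 * I) := mul_le_mul' le_rfl hAbd
        _ = (2 * ENNReal.ofReal (R / 2)) * σ B + 4 * I := by ring
        _ ≤ ENNReal.ofReal (4 * R) * σ B + 32 * I := by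
            gcongr
            · calc 2 * ENNReal.ofReal (R / 2)
                  = ENNReal.ofReal 2 * ENNReal.ofReal (R / 2) := by
                    norm_num
                _ = ENNReal.ofReal (2 * (R / 2)) := (ENNReal.ofReal_mul (by norm_num)).symm
                _ ≤ ENNReal.ofReal (4 * R) := ENNReal.ofReal_le_ofReal (by linarith)
            · norm_num
end
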